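/- arXiv:1104.1696 — 4 statements merged into one kernel-verified Lean document; each statement's English description precedes it below -/
import Mathlib

section
/- Let m, n be positive natural numbers, let A be an m×n complex matrix, and let M be an m×m Hermitian positive definite complex matrix and N an n×n Hermitian positive definite complex matrix. Then there exists exactly one n×m complex matrix X satisfying the four equations A*X*A = A, X*A*X = X, (M*A*X)ᴴ = M*A*X and (N*X*A)ᴴ = N*X*A (where ᴴ denotes conjugate transpose); this X is the weighted Moore-Penrose inverse A†_{M,N} of A. -/
open Matrix ComplexOrder

namespace WMPaux

variable {n m : Type*} [Fintype n] [DecidableEq n] [Fintype m] [DecidableEq m]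

lemma UDU_mul (U : Matrix n n ℂ) (hU : star U * U = 1) (d₁ d₂ : n → ℂ) :
    (U * diagonal d₁ * star U) * (U * diagonal d₂ * star U)
      = U * diagonal (fun i => d₁ i * d₂ i) * star U := by
  have h : (U * diagonal d₁ * star U) * (U * diagonal d₂ * star U)
      = U * (diagonal d₁ * (star U * U) * diagonal d₂) * star U := by
    simp only [Matrix.mul_assoc]
  rw [h, hU, Matrix.mul_one, Matrix.diagonal_mul_diagonal]

/-- Pseudoinverse of a Hermitian matrix, via the spectral theorem. -/
noncomputable def hpinv {B : Matrix n n ℂ} (hB : B.IsHermitian) : Matrix n n ℂ :=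
  (hB.eigenvectorUnitary : Matrix n n ℂ)
    * diagonal (fun i => if hB.eigenvalues i = 0 then 0 else ((hB.eigenvalues i : ℂ))⁻¹)
    * star (hB.eigenvectorUnitary : Matrix n n ℂ)

lemma hpinv_props {B : Matrix n n ℂ} (hB : B.IsHermitian) :
    (hpinv hB)ᴴ = hpinv hB ∧ B * hpinv hB * B = B ∧ hpinv hB * B * hpinv hB = hpinv hB ∧
      B * hpinv hB = hpinv hB * B := by
  set U : Matrix n n ℂ := (hB.eigenvectorUnitary : Matrix n n ℂ) with hUdef
  have hU : star U * U = 1 := (Unitary.mem_iff.mp hB.eigenvectorUnitary.2).1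
  set dB : n → ℂ := RCLike.ofReal ∘ hB.eigenvalues with hdB
  set dP : n → ℂ := fun i => if hB.eigenvalues i = 0 then 0 else ((hB.eigenvalues i : ℂ))⁻¹
    with hdP
  have hP : hpinv hB = U * diagonal dP * star U := rfl
  have hspec : B = U * diagonal dB * star U := hB.spectral_theorem
  have hne : ∀ i, hB.eigenvalues i ≠ 0 → (hB.eigenvalues i : ℂ) ≠ 0 := fun i h =>
    Complex.ofReal_ne_zero.mpr h
  refine ⟨?_, ?_, ?_, ?_⟩
  · rw [hP, conjTranspose_mul, conjTranspose_mul, diagonal_conjTranspose]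
    have h1 : star dP = dP := by
      funext i
      by_cases h : hB.eigenvalues i = 0 <;>
        simp [hdP, Pi.star_apply, h, ← Complex.ofReal_inv, Complex.conj_ofReal]
    have h2 : (star U)ᴴ = U := by simp [star_eq_conjTranspose]
    have h3 : Uᴴ = star U := rfl
    rw [h1, h2, h3, Matrix.mul_assoc]
  · rw [hP]
    conv_lhs => rw [hspec]
    conv_rhs => rw [hspec]
    rw [UDU_mul _ hU, UDU_mul _ hU]
    have h1 : (fun i => (fun j => dB j * dP j) i * dB i) = dB := by
      funext i
      by_cases h : hB.eigenvalues i = 0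
      · simp [hdB, hdP, h, Function.comp]
      · simp [hdB, hdP, h, Function.comp]
    rw [h1]
  · rw [hP]
    conv_lhs => rw [hspec]
    rw [UDU_mul _ hU, UDU_mul _ hU]
    have h1 : (fun i => (fun j => dP j * dB j) i * dP i) = dP := by
      funext i
      by_cases h : hB.eigenvalues i = 0
      · simp [hdB, hdP, h, Function.comp]
      · simp [hdB, hdP, h, Function.comp]
    rw [h1]
  · rw [hP]
    conv_lhs => rw [hspec]
    conv_rhs => rw [hspec]
    rw [UDU_mul _ hU, UDU_mul _ hU]
    have h1 : (fun i => dB i * dP i) = fun i => dP i * dB i := by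
      funext i; ring
    rw [h1]

/-- Existence of the ordinary Moore-Penrose inverse. -/
lemma mp_exists (A : Matrix m n ℂ) :
    ∃ X : Matrix n m ℂ, A * X * A = A ∧ X * A * X = X ∧ (A * X)ᴴ = A * X ∧ (X * A)ᴴ = X * A := by
  have hB : (Aᴴ * A).IsHermitian := (posSemidef_conjTranspose_mul_self A).1
  obtain ⟨hh, h1, h2, h4⟩ := hpinv_props hB
  set P := hpinv hB with hPdef
  refine ⟨P * Aᴴ, ?_, ?_, ?_, ?_⟩
  · have h0 : (Aᴴ * A) * (P * (Aᴴ * A) - 1) = 0 := by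
      rw [Matrix.mul_sub, Matrix.mul_one, ← Matrix.mul_assoc (Aᴴ * A) P (Aᴴ * A), h1, sub_self]
    have h0' := (conjTranspose_mul_self_mul_eq_zero A _).mp h0
    rw [Matrix.mul_sub, Matrix.mul_one] at h0'
    have key := sub_eq_zero.mp h0'
    rw [Matrix.mul_assoc, Matrix.mul_assoc P Aᴴ A] at *
    exact key
  · have := congrArg (· * Aᴴ) h2
    simp only [Matrix.mul_assoc] at this ⊢
    exact this
  · simp only [conjTranspose_mul, conjTranspose_conjTranspose, hh, Matrix.mul_assoc]
  · rw [conjTranspose_mul, conjTranspose_mul, conjTranspose_conjTranspose, hh,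
      ← Matrix.mul_assoc, h4]
    simp only [Matrix.mul_assoc]

/-- Uniqueness of the ordinary Moore-Penrose inverse. -/
lemma mp_unique (A : Matrix m n ℂ) (X Y : Matrix n m ℂ)
    (hX : A * X * A = A ∧ X * A * X = X ∧ (A * X)ᴴ = A * X ∧ (X * A)ᴴ = X * A)
    (hY : A * Y * A = A ∧ Y * A * Y = Y ∧ (A * Y)ᴴ = A * Y ∧ (Y * A)ᴴ = Y * A) : X = Y := by
  obtain ⟨hX1, hX2, hX3, hX4⟩ := hX
  obtain ⟨hY1, hY2, hY3, hY4⟩ := hY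
  have hAX : A * X = A * Y := by
    calc A * X = (A * X)ᴴ := hX3.symm
    _ = Xᴴ * Aᴴ := conjTranspose_mul A X
    _ = Xᴴ * (A * Y * A)ᴴ := by rw [hY1]
    _ = Xᴴ * (Aᴴ * (A * Y)ᴴ) := by rw [conjTranspose_mul (A * Y) A]
    _ = (Xᴴ * Aᴴ) * (A * Y)ᴴ := by rw [Matrix.mul_assoc]
    _ = (A * X)ᴴ * (A * Y) := by rw [← conjTranspose_mul A X, hY3]
    _ = (A * X) * (A * Y) := by rw [hX3]
    _ = (A * X * A) * Y := by simp only [Matrix.mul_assoc]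
    _ = A * Y := by rw [hX1]
  have hXA : X * A = Y * A := by
    calc X * A = (X * A)ᴴ := hX4.symm
    _ = Aᴴ * Xᴴ := conjTranspose_mul X A
    _ = (A * Y * A)ᴴ * Xᴴ := by rw [hY1]
    _ = ((Y * A)ᴴ * Aᴴ) * Xᴴ := by rw [Matrix.mul_assoc, conjTranspose_mul A (Y * A)]
    _ = (Y * A) * (Aᴴ * Xᴴ) := by rw [hY4, Matrix.mul_assoc]
    _ = (Y * A) * (X * A)ᴴ := by rw [← conjTranspose_mul X A]
    _ = (Y * A) * (X * A) := by rw [hX4]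
    _ = Y * (A * X * A) := by simp only [Matrix.mul_assoc]
    _ = Y * A := by rw [hX1]
  calc X = X * A * X := hX2.symm
  _ = Y * A * X := by rw [hXA]
  _ = Y * (A * X) := Matrix.mul_assoc Y A X
  _ = Y * (A * Y) := by rw [hAX]
  _ = Y * A * Y := (Matrix.mul_assoc Y A Y).symm
  _ = Y := hY2

end WMPaux

open WMPaux in
/-- Existence and uniqueness of the weighted Moore-Penrose inverse of a complex
matrix `A` with respect to Hermitian positive definite weights `M` and `N`. -/
theorem weighted_moore_penrose_exists_unique
    (m n : ℕ) (hm : 0 < m) (hn : 0 < n)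
    (A : Matrix (Fin m) (Fin n) ℂ)
    (M : Matrix (Fin m) (Fin m) ℂ) (N : Matrix (Fin n) (Fin n) ℂ)
    (hM : M.PosDef) (hN : N.PosDef) :
    ∃! X : Matrix (Fin n) (Fin m) ℂ,
      A * X * A = A ∧ X * A * X = X ∧
      (M * A * X)ᴴ = M * A * X ∧ (N * X * A)ᴴ = N * X * A := by
  have hMsd := hM.posSemidef
  have hNsd := hN.posSemidef
  obtain ⟨Sm, hSmH, hSmM⟩ : ∃ S : Matrix (Fin m) (Fin m) ℂ, Sᴴ = S ∧ S * S = M := by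
    open scoped MatrixOrder in
    exact ⟨CFC.sqrt M, (CFC.sqrt_nonneg M).posSemidef.1, CFC.sqrt_mul_sqrt_self M hMsd.nonneg⟩
  obtain ⟨Sn, hSnH, hSnN⟩ : ∃ S : Matrix (Fin n) (Fin n) ℂ, Sᴴ = S ∧ S * S = N := by
    open scoped MatrixOrder in
    exact ⟨CFC.sqrt N, (CFC.sqrt_nonneg N).posSemidef.1, CFC.sqrt_mul_sqrt_self N hNsd.nonneg⟩
  haveI : Invertible Sm := by
    apply Matrix.invertibleOfIsUnitDet
    have hdet : Sm.det * Sm.det = M.det := by rw [← Matrix.det_mul, hSmM]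
    have hMdet : M.det ≠ 0 := hM.det_pos.ne'
    have : Sm.det ≠ 0 := fun h => hMdet (by rw [← hdet, h, mul_zero])
    exact this.isUnit
  haveI : Invertible Sn := by
    apply Matrix.invertibleOfIsUnitDet
    have hdet : Sn.det * Sn.det = N.det := by rw [← Matrix.det_mul, hSnN]
    have hNdet : N.det ≠ 0 := hN.det_pos.ne'
    have : Sn.det ≠ 0 := fun h => hNdet (by rw [← hdet, h, mul_zero])
    exact this.isUnit
  have hSmInvH : (Sm⁻¹)ᴴ = Sm⁻¹ := by rw [Matrix.conjTranspose_nonsing_inv, hSmH]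
  have hSnInvH : (Sn⁻¹)ᴴ = Sn⁻¹ := by rw [Matrix.conjTranspose_nonsing_inv, hSnH]
  set B := Sm * A * Sn⁻¹ with hBdef
  obtain ⟨Z, hZ1, hZ2, hZ3, hZ4⟩ := mp_exists B
  refine ⟨Sn⁻¹ * Z * Sm, ⟨?_, ?_, ?_, ?_⟩, ?_⟩
  · have h := congrArg (fun W => Sm⁻¹ * W * Sn) hZ1
    simp only [hBdef, Matrix.mul_assoc, Matrix.inv_mul_cancel_left_of_invertible,
      Matrix.mul_inv_cancel_left_of_invertible, Matrix.inv_mul_of_invertible,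
      Matrix.mul_inv_of_invertible, Matrix.mul_one, Matrix.one_mul] at h ⊢
    exact h
  · have h := congrArg (fun W => Sn⁻¹ * W * Sm) hZ2
    simp only [hBdef, Matrix.mul_assoc, Matrix.inv_mul_cancel_left_of_invertible,
      Matrix.mul_inv_cancel_left_of_invertible, Matrix.inv_mul_of_invertible,
      Matrix.mul_inv_of_invertible, Matrix.mul_one, Matrix.one_mul] at h ⊢
    exact h
  · have e3 : M * A * (Sn⁻¹ * Z * Sm) = Sm * (B * Z) * Sm := by
      rw [← hSmM]
      simp only [hBdef, Matrix.mul_assoc, Matrix.inv_mul_cancel_left_of_invertible,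
        Matrix.mul_inv_cancel_left_of_invertible, Matrix.inv_mul_of_invertible,
        Matrix.mul_inv_of_invertible, Matrix.mul_one, Matrix.one_mul]
    rw [e3, conjTranspose_mul, conjTranspose_mul, hZ3, hSmH]
    simp only [Matrix.mul_assoc]
  · have e4 : N * (Sn⁻¹ * Z * Sm) * A = Sn * (Z * B) * Sn := by
      rw [← hSnN]
      simp only [hBdef, Matrix.mul_assoc, Matrix.inv_mul_cancel_left_of_invertible,
        Matrix.mul_inv_cancel_left_of_invertible, Matrix.inv_mul_of_invertible,
        Matrix.mul_inv_of_invertible, Matrix.mul_one, Matrix.one_mul]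
    rw [e4, conjTranspose_mul, conjTranspose_mul, hZ4, hSnH]
    simp only [Matrix.mul_assoc]
  · rintro Y ⟨hy1, hy2, hy3, hy4⟩
    have hW : Sn * Y * Sm⁻¹ = Z := by
      apply mp_unique B _ Z _ ⟨hZ1, hZ2, hZ3, hZ4⟩
      refine ⟨?_, ?_, ?_, ?_⟩
      · have h := congrArg (fun W => Sm * W * Sn⁻¹) hy1
        simp only [hBdef, Matrix.mul_assoc, Matrix.inv_mul_cancel_left_of_invertible,
          Matrix.mul_inv_cancel_left_of_invertible, Matrix.inv_mul_of_invertible,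
          Matrix.mul_inv_of_invertible, Matrix.mul_one, Matrix.one_mul] at h ⊢
        exact h
      · have h := congrArg (fun W => Sn * W * Sm⁻¹) hy2
        simp only [hBdef, Matrix.mul_assoc, Matrix.inv_mul_cancel_left_of_invertible,
          Matrix.mul_inv_cancel_left_of_invertible, Matrix.inv_mul_of_invertible,
          Matrix.mul_inv_of_invertible, Matrix.mul_one, Matrix.one_mul] at h ⊢
        exact h
      · have e : B * (Sn * Y * Sm⁻¹) = Sm⁻¹ * (M * A * Y) * Sm⁻¹ := by
          rw [← hSmM]
          simp only [hBdef, Matrix.mul_assoc, Matrix.inv_mul_cancel_left_of_invertible,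
            Matrix.mul_inv_cancel_left_of_invertible, Matrix.inv_mul_of_invertible,
            Matrix.mul_inv_of_invertible, Matrix.mul_one, Matrix.one_mul]
        rw [e, conjTranspose_mul, conjTranspose_mul, hy3, hSmInvH]
        simp only [Matrix.mul_assoc]
      · have e : (Sn * Y * Sm⁻¹) * B = Sn⁻¹ * (N * Y * A) * Sn⁻¹ := by
          rw [← hSnN]
          simp only [hBdef, Matrix.mul_assoc, Matrix.inv_mul_cancel_left_of_invertible,
            Matrix.mul_inv_cancel_left_of_invertible, Matrix.inv_mul_of_invertible,
            Matrix.mul_inv_of_invertible, Matrix.mul_one, Matrix.one_mul]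
        rw [e, conjTranspose_mul, conjTranspose_mul, hy4, hSnInvH]
        simp only [Matrix.mul_assoc]
    have h := congrArg (fun W => Sn⁻¹ * W * Sm) hW
    simp only [Matrix.mul_assoc, Matrix.inv_mul_cancel_left_of_invertible,
      Matrix.mul_inv_cancel_left_of_invertible, Matrix.inv_mul_of_invertible,
      Matrix.mul_inv_of_invertible, Matrix.mul_one, Matrix.one_mul] at h
    rw [h, Matrix.mul_assoc]
end

section
/- Let m, k be positive natural numbers. Let A be an m×k complex matrix, a an m×1 complex matrix, and form the m×(k+1) matrix Â = [A | a] by appending the column a to A. Let M be an m×m Hermitian positive definite complex matrix, and let N be the (k+1)×(k+1) block matrix N = fromBlocks N₁ l lᴴ ν (with N₁ ∈ ℂ^{k×k}, l ∈ ℂ^{k×1}, ν ∈ ℂ^{1×1}); assume N is Hermitian positive definite (so N₁ is invertible). Let X ∈ ℂ^{k×m} be the weighted Moore-Penrose inverse of A with respect to (M, N₁), i.e. A*X*A = A, X*A*X = X, (M*A*X)ᴴ = M*A*X and (N₁*X*A)ᴴ = N₁*X*A. Set d = X*a ∈ ℂ^{k×1} and c = a − A*d ∈ ℂ^{m×1},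 and assume c ≠ 0. Then cᴴ*M*c is an invertible 1×1 matrix; define b⋆ = (cᴴ*M*c)⁻¹ * cᴴ * M ∈ ℂ^{1×m} and the (k+1)×m matrix X' whose top k×m block is X − (d + (I_k − X*A) * N₁⁻¹ * l) * b⋆ and whose bottom row is b⋆. Then X' satisfies Â*X'*Â = Â, X'*Â*X' = X', (M*Â*X')ᴴ = M*Â*X' and (N*X'*Â)ᴴ = N*X'*Â; that is, X' is the weighted Moore-Penrose inverse of Â with respect to (M, N). -/
open Matrix ComplexOrder

/-- Recursive step of Wang's partitioning method (case `c ≠ 0`): given the weighted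
Moore-Penrose inverse `X` of `A` w.r.t. `(M, N₁)`, the weighted Moore-Penrose inverse
of the augmented matrix `[A | a]` w.r.t. `(M, fromBlocks N₁ l lᴴ ν)` is obtained by
stacking `X - (d + (I - X*A) * N₁⁻¹ * l) * b⋆` on top of the row `b⋆`, where
`d = X*a`, `c = a - A*d ≠ 0` and `b⋆ = (cᴴ*M*c)⁻¹ * cᴴ * M`. -/
theorem weighted_moore_penrose_partition_step_c_ne_zero
    (m k : ℕ) (hm : 0 < m) (hk : 0 < k)
    (A : Matrix (Fin m) (Fin k) ℂ) (a : Matrix (Fin m) (Fin 1) ℂ)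
    (M : Matrix (Fin m) (Fin m) ℂ) (hM : M.PosDef)
    (N₁ : Matrix (Fin k) (Fin k) ℂ) (l : Matrix (Fin k) (Fin 1) ℂ)
    (ν : Matrix (Fin 1) (Fin 1) ℂ)
    (hN : (Matrix.fromBlocks N₁ l lᴴ ν).PosDef)
    (X : Matrix (Fin k) (Fin m) ℂ)
    (hX1 : A * X * A = A) (hX2 : X * A * X = X)
    (hX3 : (M * A * X)ᴴ = M * A * X) (hX4 : (N₁ * X * A)ᴴ = N₁ * X * A)
    (d : Matrix (Fin k) (Fin 1) ℂ) (hd : d = X * a)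
    (c : Matrix (Fin m) (Fin 1) ℂ) (hc : c = a - A * d) (hc0 : c ≠ 0) :
    IsUnit (cᴴ * M * c) ∧
    ∀ b : Matrix (Fin 1) (Fin m) ℂ, b = (cᴴ * M * c)⁻¹ * cᴴ * M →
    ∀ X' : Matrix (Fin k ⊕ Fin 1) (Fin m) ℂ,
      X' = Matrix.fromRows (X - (d + (1 - X * A) * N₁⁻¹ * l) * b) b →
      (Matrix.fromCols A a) * X' * (Matrix.fromCols A a) = Matrix.fromCols A a ∧
      X' * (Matrix.fromCols A a) * X' = X' ∧
      (M * (Matrix.fromCols A a) * X')ᴴ = M * (Matrix.fromCols A a) * X' ∧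
      ((Matrix.fromBlocks N₁ l lᴴ ν) * X' * (Matrix.fromCols A a))ᴴ =
        (Matrix.fromBlocks N₁ l lᴴ ν) * X' * (Matrix.fromCols A a) := by
  have hMH : Mᴴ = M := hM.isHermitian
  have hNH := hN.isHermitian
  rw [Matrix.IsHermitian, fromBlocks_conjTranspose, conjTranspose_conjTranspose] at hNH
  have hN1H : N₁ᴴ = N₁ := by
    have := congrArg Matrix.toBlocks₁₁ hNH; simpa [Matrix.toBlocks_fromBlocks₁₁] using this
  have hνH : νᴴ = ν := by
    have := congrArg Matrix.toBlocks₂₂ hNH; simpa [Matrix.toBlocks_fromBlocks₂₂] using this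
  have hN1 : N₁.PosDef := by
    refine Matrix.PosDef.of_dotProduct_mulVec_pos hN1H (fun x hx => ?_)
    have hy : (Sum.elim x (0 : Fin 1 → ℂ)) ≠ 0 := by
      intro h; exact hx (funext fun i => congrFun h (Sum.inl i))
    have := hN.dotProduct_mulVec_pos hy
    have e1 : star (Sum.elim x (0 : Fin 1 → ℂ)) ∘ Sum.inl = star x := by
      funext i; simp
    have e2 : star (Sum.elim x (0 : Fin 1 → ℂ)) ∘ Sum.inr = 0 := by
      funext i; simp
    simpa [Matrix.fromBlocks_mulVec, dotProduct_block, e1, e2] using this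
  have hN1u : IsUnit N₁.det := (isUnit_iff_isUnit_det _).1 hN1.isUnit
  have hNi1 : N₁ * N₁⁻¹ = 1 := mul_nonsing_inv _ hN1u
  have hNi2 : N₁⁻¹ * N₁ = 1 := nonsing_inv_mul _ hN1u
  have hNiH : N₁⁻¹ᴴ = N₁⁻¹ := by rw [Matrix.conjTranspose_nonsing_inv, hN1H]
  -- `cᴴ M c` is a unit
  have hv : (fun i => c i 0) ≠ 0 := by
    intro h; apply hc0; ext i j
    have := congrFun h i
    have hj : j = 0 := Subsingleton.elim _ _
    simpa [hj] using this
  have hpos := hM.dotProduct_mulVec_pos hv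
  have hentry : (cᴴ * M * c) 0 0 = dotProduct (star fun i => c i 0) (M *ᵥ fun i => c i 0) := by
    simp [Matrix.mul_apply, dotProduct, Matrix.mulVec, Finset.sum_mul, Finset.mul_sum,
      mul_assoc]
    rw [Finset.sum_comm]
  have hUnit : IsUnit (cᴴ * M * c) := by
    refine (Matrix.isUnit_iff_isUnit_det _).2 ?_
    rw [Matrix.det_fin_one, hentry]
    exact hpos.ne'.isUnit
  refine ⟨hUnit, ?_⟩
  intro b hb X' hX'
  have hS : (cᴴ * M * c)⁻¹ * (cᴴ * M * c) = 1 :=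
    nonsing_inv_mul _ ((isUnit_iff_isUnit_det _).1 hUnit)
  have hSH : (cᴴ * M * c)ᴴ = cᴴ * M * c := by
    simp [Matrix.conjTranspose_mul, hMH, Matrix.mul_assoc]
  -- key Hermitian-adjoint facts
  have e3 : Xᴴ * (Aᴴ * M) = M * (A * X) := by
    conv_lhs => rw [← hMH]
    rw [← Matrix.conjTranspose_mul, ← Matrix.conjTranspose_mul, hX3, Matrix.mul_assoc]
  have e4 : Aᴴ * (Xᴴ * N₁) = N₁ * (X * A) := by
    conv_lhs => rw [← hN1H]
    rw [← Matrix.conjTranspose_mul, ← Matrix.conjTranspose_mul, hX4, Matrix.mul_assoc]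
  have r1 : A * (X * A) = A := by rw [← Matrix.mul_assoc, hX1]
  have e3' : Xᴴ * (Aᴴ * (M * A)) = M * A := by
    have h := congrArg (· * A) e3
    simp only [Matrix.mul_assoc] at h
    rw [h, r1]
  have e4' : Aᴴ * Xᴴ = N₁ * (X * A) * N₁⁻¹ := by
    have h := congrArg (· * N₁⁻¹) e4
    simp only [Matrix.mul_assoc, hNi1, Matrix.mul_one] at h
    simpa [Matrix.mul_assoc] using h
  -- facts about b
  have hcMA : cᴴ * (M * A) = 0 := by
    rw [hc, hd]
    simp only [Matrix.conjTranspose_sub, Matrix.conjTranspose_mul, Matrix.sub_mul,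
      Matrix.mul_assoc, e3', sub_self]
  have hbA : b * A = 0 := by
    rw [hb]
    simp only [Matrix.mul_assoc]
    rw [hcMA, Matrix.mul_zero]
  have hbc : b * c = 1 := by
    rw [hb]
    simpa [Matrix.mul_assoc] using hS
  have ha : a = c + A * d := by rw [hc]; abel
  have hba : b * a = 1 := by
    rw [ha, Matrix.mul_add, hbc, ← Matrix.mul_assoc, hbA, Matrix.zero_mul, add_zero]
  -- product computations
  have hAw : A * ((1 - X * A) * N₁⁻¹ * l) = 0 := by
    have h0 : A * (1 - X * A) = 0 := by
      rw [Matrix.mul_sub, Matrix.mul_one, ← Matrix.mul_assoc, hX1, sub_self]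
    calc A * ((1 - X * A) * N₁⁻¹ * l) = A * (1 - X * A) * N₁⁻¹ * l := by
          simp only [Matrix.mul_assoc]
      _ = 0 := by rw [h0, Matrix.zero_mul, Matrix.zero_mul]
  have hXAw : X * A * ((1 - X * A) * N₁⁻¹ * l) = 0 := by
    have h0 : X * A * (1 - X * A) = 0 := by
      rw [Matrix.mul_sub, Matrix.mul_one, ← Matrix.mul_assoc, hX2, sub_self]
    calc X * A * ((1 - X * A) * N₁⁻¹ * l) = X * A * (1 - X * A) * N₁⁻¹ * l := by
          simp only [Matrix.mul_assoc]
      _ = 0 := by rw [h0, Matrix.zero_mul, Matrix.zero_mul]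
  have hXAd : X * A * d = d := by
    rw [hd, ← Matrix.mul_assoc, hX2]
  have hP : Matrix.fromCols A a * X' = A * X + c * b := by
    rw [hX', fromCols_mul_fromRows, Matrix.mul_sub,
      ← Matrix.mul_assoc A (d + (1 - X * A) * N₁⁻¹ * l) b, Matrix.mul_add A, hAw, add_zero,
      hc, Matrix.sub_mul]
    abel
  have hQ : X' * Matrix.fromCols A a =
      Matrix.fromBlocks (X * A) (-((1 - X * A) * N₁⁻¹ * l)) 0 1 := by
    rw [hX', fromRows_mul_fromCols]
    refine Matrix.fromBlocks_inj.mpr ⟨?_, ?_, hbA, hba⟩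
    · rw [Matrix.sub_mul, Matrix.mul_assoc, hbA, Matrix.mul_zero, sub_zero]
    · rw [Matrix.sub_mul, Matrix.mul_assoc, hba, Matrix.mul_one, ← hd]
      abel
  refine ⟨?_, ?_, ?_, ?_⟩
  · -- goal 1
    rw [hP, mul_fromCols]
    have g1 : (A * X + c * b) * A = A := by
      rw [Matrix.add_mul, hX1, Matrix.mul_assoc, hbA, Matrix.mul_zero, add_zero]
    have g2 : (A * X + c * b) * a = a := by
      rw [Matrix.add_mul, Matrix.mul_assoc A X a, ← hd, Matrix.mul_assoc c b a, hba,
        Matrix.mul_one, hc]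
      abel
    rw [g1, g2]
  · -- goal 2
    rw [hQ, hX', fromBlocks_mul_fromRows]
    refine (Matrix.fromRows_ext_iff _ _ _ _).mpr ⟨?_, by rw [Matrix.zero_mul, Matrix.one_mul, zero_add]⟩
    rw [Matrix.mul_sub, hX2, ← Matrix.mul_assoc (X * A) (d + (1 - X * A) * N₁⁻¹ * l) b,
      Matrix.mul_add (X * A), hXAd, hXAw, add_zero, Matrix.neg_mul, Matrix.add_mul]
    abel
  · -- goal 3
    rw [Matrix.mul_assoc, hP, hb]
    have hSiH : ((cᴴ * M * c)⁻¹)ᴴ = (cᴴ * M * c)⁻¹ := by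
      rw [Matrix.conjTranspose_nonsing_inv, hSH]
    simp only [Matrix.mul_add, Matrix.conjTranspose_add, Matrix.conjTranspose_mul,
      Matrix.conjTranspose_nonsing_inv, Matrix.conjTranspose_conjTranspose, hMH,
      Matrix.mul_assoc, e3]
  · -- goal 4
    rw [Matrix.mul_assoc, hQ, fromBlocks_multiply]
    simp only [Matrix.mul_zero, Matrix.mul_one, add_zero, Matrix.mul_neg, Matrix.zero_mul,
      Matrix.mul_zero]
    have hNw : N₁ * ((1 - X * A) * N₁⁻¹ * l) = l - N₁ * (X * A) * N₁⁻¹ * l := by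
      calc N₁ * ((1 - X * A) * N₁⁻¹ * l) = N₁ * (1 - X * A) * N₁⁻¹ * l := by
            simp only [Matrix.mul_assoc]
        _ = (N₁ - N₁ * (X * A)) * N₁⁻¹ * l := by rw [Matrix.mul_sub, Matrix.mul_one]
        _ = N₁ * N₁⁻¹ * l - N₁ * (X * A) * N₁⁻¹ * l := by simp only [Matrix.sub_mul]
        _ = l - N₁ * (X * A) * N₁⁻¹ * l := by rw [hNi1, Matrix.one_mul]
    have hAXl : Aᴴ * Xᴴ * l = N₁ * (X * A) * N₁⁻¹ * l := by rw [e4']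
    have h12 : (lᴴ * (X * A))ᴴ = -(N₁ * ((1 - X * A) * N₁⁻¹ * l)) + l := by
      rw [Matrix.conjTranspose_mul, Matrix.conjTranspose_mul,
        Matrix.conjTranspose_conjTranspose, hNw, hAXl]
      abel
    have hwexp : (1 - X * A) * N₁⁻¹ * l = N₁⁻¹ * l - X * (A * (N₁⁻¹ * l)) := by
      simp only [Matrix.sub_mul, Matrix.one_mul, Matrix.mul_assoc]
    have hkey : N₁⁻¹ * (Aᴴ * (Xᴴ * l)) = X * (A * (N₁⁻¹ * l)) := by
      have h := congrArg (fun Z => N₁⁻¹ * (Z * l)) e4'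
      simp only [Matrix.mul_assoc] at h
      rw [h, ← Matrix.mul_assoc N₁⁻¹ N₁, hNi2, Matrix.one_mul]
    have hlw : (lᴴ * ((1 - X * A) * N₁⁻¹ * l))ᴴ = lᴴ * ((1 - X * A) * N₁⁻¹ * l) := by
      rw [hwexp, Matrix.mul_sub, Matrix.conjTranspose_sub]
      simp only [Matrix.conjTranspose_mul, Matrix.conjTranspose_conjTranspose, hNiH,
        Matrix.mul_assoc]
      rw [hkey]
    rw [fromBlocks_conjTranspose]
    refine Matrix.fromBlocks_inj.mpr ⟨?_, ?_, ?_, ?_⟩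
    · simpa [Matrix.mul_assoc] using hX4
    · exact h12
    · rw [← h12, Matrix.conjTranspose_conjTranspose]
    · rw [Matrix.conjTranspose_add, Matrix.conjTranspose_neg, hlw, hνH]
end

section
/- Let m, k be positive natural numbers. Let A be an m×k complex matrix, a an m×1 complex matrix, and form the m×(k+1) matrix Â = [A | a] by appending the column a to A. Let M be an m×m Hermitian positive definite complex matrix, and let N be the (k+1)×(k+1) block matrix N = fromBlocks N₁ l lᴴ ν (with N₁ ∈ ℂ^{k×k}, l ∈ ℂ^{k×1}, ν ∈ ℂ^{1×1}); assume N is Hermitian positive definite (so N₁ is invertible). Let X ∈ ℂ^{k×m} be the weighted Moore-Penrose inverse of A with respect to (M, N₁). Set d = X*a ∈ ℂ^{k×1} and c = a − A*d ∈ ℂ^{m×1}, and assume c = 0. Define the 1×1 matrix δ = ν + dᴴ*N₁*d − (dᴴ*l + lᴴ*d) − lᴴ*(I_k − X*A)*N₁⁻¹*l, assume δ is invertible, and define b⋆ = δ⁻¹ * (dᴴ*N₁ − lᴴ) * X ∈ ℂ^{1×m} and the (k+1)×m matrix X' whose top k×m block is X − (d + (I_k − X*A) * N₁⁻¹ * l)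 * b⋆ and whose bottom row is b⋆. Then X' satisfies Â*X'*Â = Â, X'*Â*X' = X', (M*Â*X')ᴴ = M*Â*X' and (N*X'*Â)ᴴ = N*X'*Â; that is, X' is the weighted Moore-Penrose inverse of Â with respect to (M, N). -/
open Matrix ComplexOrder

/-- Recursive step of Wang's partitioning method (case `c = 0`): given the weighted
Moore-Penrose inverse `X` of `A` w.r.t. `(M, N₁)`, with `d = X*a`, `c = a - A*d = 0`,
`δ = ν + dᴴ*N₁*d - (dᴴ*l + lᴴ*d) - lᴴ*(I - X*A)*N₁⁻¹*l` invertible and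
`b⋆ = δ⁻¹ * (dᴴ*N₁ - lᴴ) * X`, the weighted Moore-Penrose inverse of `[A | a]`
w.r.t. `(M, fromBlocks N₁ l lᴴ ν)` is obtained by stacking
`X - (d + (I - X*A) * N₁⁻¹ * l) * b⋆` on top of the row `b⋆`. -/
theorem weighted_moore_penrose_partition_step_c_eq_zero
    (m k : ℕ) (hm : 0 < m) (hk : 0 < k)
    (A : Matrix (Fin m) (Fin k) ℂ) (a : Matrix (Fin m) (Fin 1) ℂ)
    (M : Matrix (Fin m) (Fin m) ℂ) (hM : M.PosDef)
    (N₁ : Matrix (Fin k) (Fin k) ℂ) (l : Matrix (Fin k) (Fin 1) ℂ)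
    (ν : Matrix (Fin 1) (Fin 1) ℂ)
    (hN : (Matrix.fromBlocks N₁ l lᴴ ν).PosDef)
    (X : Matrix (Fin k) (Fin m) ℂ)
    (hX1 : A * X * A = A) (hX2 : X * A * X = X)
    (hX3 : (M * A * X)ᴴ = M * A * X) (hX4 : (N₁ * X * A)ᴴ = N₁ * X * A)
    (d : Matrix (Fin k) (Fin 1) ℂ) (hd : d = X * a)
    (c : Matrix (Fin m) (Fin 1) ℂ) (hc : c = a - A * d) (hc0 : c = 0)
    (δ : Matrix (Fin 1) (Fin 1) ℂ)
    (hδ : δ = ν + dᴴ * N₁ * d - (dᴴ * l + lᴴ * d) - lᴴ * (1 - X * A) * N₁⁻¹ * l)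
    (hδu : IsUnit δ)
    (b : Matrix (Fin 1) (Fin m) ℂ) (hb : b = δ⁻¹ * (dᴴ * N₁ - lᴴ) * X)
    (X' : Matrix (Fin k ⊕ Fin 1) (Fin m) ℂ)
    (hX' : X' = Matrix.fromRows (X - (d + (1 - X * A) * N₁⁻¹ * l) * b) b) :
    (Matrix.fromCols A a) * X' * (Matrix.fromCols A a) = Matrix.fromCols A a ∧
    X' * (Matrix.fromCols A a) * X' = X' ∧
    (M * (Matrix.fromCols A a) * X')ᴴ = M * (Matrix.fromCols A a) * X' ∧
    ((Matrix.fromBlocks N₁ l lᴴ ν) * X' * (Matrix.fromCols A a))ᴴ =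
      (Matrix.fromBlocks N₁ l lᴴ ν) * X' * (Matrix.fromCols A a) := by
  set u : Matrix (Fin k) (Fin 1) ℂ := d + (1 - X * A) * N₁⁻¹ * l with hu
  -- basic consequences of `c = 0`
  have ha : a = A * d := sub_eq_zero.mp (by rw [← hc, hc0])
  -- Hermitian structure of the blocks of `N`
  have hNblocks := Matrix.isHermitian_fromBlocks_iff.mp hN.1
  have hN₁h : N₁ᴴ = N₁ := hNblocks.1
  have hνh : νᴴ = ν := hNblocks.2.2.2
  -- `N₁` is positive definite, hence invertible
  have hN₁pd : N₁.PosDef := by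
    refine Matrix.PosDef.of_dotProduct_mulVec_pos hNblocks.1 (fun x hx => ?_)
    have hx' : Sum.elim x (0 : Fin 1 → ℂ) ≠ 0 :=
      fun h => hx (funext fun i => congrFun h (Sum.inl i))
    have h2 := hN.dotProduct_mulVec_pos hx'
    have hst : star (Sum.elim x (0 : Fin 1 → ℂ)) = Sum.elim (star x) 0 := by
      funext i; cases i <;> simp
    rwa [Matrix.fromBlocks_mulVec, Sum.elim_comp_inl, Sum.elim_comp_inr,
      Matrix.mulVec_zero, Matrix.mulVec_zero, add_zero, add_zero,
      hst, sumElim_dotProduct_sumElim, zero_dotProduct, add_zero] at h2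
  have hN₁d : IsUnit N₁.det := (Matrix.isUnit_iff_isUnit_det _).mp hN₁pd.isUnit
  have hNi1 : N₁ * N₁⁻¹ = 1 := Matrix.mul_nonsing_inv _ hN₁d
  have hNi2 : N₁⁻¹ * N₁ = 1 := Matrix.nonsing_inv_mul _ hN₁d
  have hN₁ih : N₁⁻¹ᴴ = N₁⁻¹ := by rw [Matrix.conjTranspose_nonsing_inv, hN₁h]
  have hδd : IsUnit δ.det := (Matrix.isUnit_iff_isUnit_det _).mp hδu
  have hδi1 : δ * δ⁻¹ = 1 := Matrix.mul_nonsing_inv _ hδd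
  have hδi2 : δ⁻¹ * δ = 1 := Matrix.nonsing_inv_mul _ hδd
  -- symmetry facts
  have hsym' : Aᴴ * Xᴴ * N₁ = N₁ * X * A := by
    have h := hX4
    rw [Matrix.conjTranspose_mul, Matrix.conjTranspose_mul, hN₁h, ← Matrix.mul_assoc] at h
    exact h
  have hsym : Aᴴ * (Xᴴ * N₁) = N₁ * (X * A) := by
    rw [← Matrix.mul_assoc, hsym', Matrix.mul_assoc]
  have hsymg : ∀ {p : ℕ} (Y : Matrix (Fin k) (Fin p) ℂ),
      Aᴴ * (Xᴴ * (N₁ * Y)) = N₁ * (X * (A * Y)) := by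
    intro p Y
    rw [← Matrix.mul_assoc, ← Matrix.mul_assoc, hsym', Matrix.mul_assoc, Matrix.mul_assoc]
  have gsym' : ∀ {p : ℕ} (Y : Matrix (Fin k) (Fin p) ℂ),
      N₁ * (X * (A * Y)) = Aᴴ * (Xᴴ * (N₁ * Y)) := fun Y => (hsymg Y).symm
  have gN1 : ∀ {p : ℕ} (Y : Matrix (Fin k) (Fin p) ℂ), N₁ * (N₁⁻¹ * Y) = Y := by
    intro p Y; rw [← Matrix.mul_assoc, hNi1, Matrix.one_mul]
  have gX1 : ∀ {p : ℕ} (Y : Matrix (Fin k) (Fin p) ℂ), A * (X * (A * Y)) = A * Y := by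
    intro p Y; rw [← Matrix.mul_assoc, ← Matrix.mul_assoc, hX1]
  have gX2b : X * (A * X) = X := by rw [← Matrix.mul_assoc, hX2]
  have hXAd : X * A * d = d := by rw [Matrix.mul_assoc, ← ha, ← hd]
  have hdAX : dᴴ * (Aᴴ * Xᴴ) = dᴴ := by
    have h := congrArg Matrix.conjTranspose hXAd
    rwa [Matrix.conjTranspose_mul, Matrix.conjTranspose_mul] at h
  have hdN : dᴴ * N₁ * (X * A) = dᴴ * N₁ := by
    rw [Matrix.mul_assoc, ← hsym, ← Matrix.mul_assoc Aᴴ Xᴴ N₁, ← Matrix.mul_assoc dᴴ _ N₁, hdAX]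
  -- δ is Hermitian
  have h1 : N₁⁻¹ * (Aᴴ * Xᴴ) = X * A * N₁⁻¹ := by
    calc N₁⁻¹ * (Aᴴ * Xᴴ) = N₁⁻¹ * (Aᴴ * Xᴴ) * (N₁ * N₁⁻¹) := by rw [hNi1, Matrix.mul_one]
      _ = N₁⁻¹ * (Aᴴ * Xᴴ * N₁) * N₁⁻¹ := by simp only [Matrix.mul_assoc]
      _ = N₁⁻¹ * (N₁ * X * A) * N₁⁻¹ := by rw [hsym']
      _ = X * A * N₁⁻¹ := by
          rw [Matrix.mul_assoc N₁ X A, ← Matrix.mul_assoc N₁⁻¹ N₁ (X * A), hNi2,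
            Matrix.one_mul, Matrix.mul_assoc]
  have h1g : ∀ {p : ℕ} (Y : Matrix (Fin k) (Fin p) ℂ),
      N₁⁻¹ * (Aᴴ * (Xᴴ * Y)) = X * (A * (N₁⁻¹ * Y)) := by
    intro p Y
    calc N₁⁻¹ * (Aᴴ * (Xᴴ * Y)) = N₁⁻¹ * (Aᴴ * Xᴴ) * Y := by
          rw [← Matrix.mul_assoc Aᴴ Xᴴ Y, ← Matrix.mul_assoc]
      _ = X * A * N₁⁻¹ * Y := by rw [h1]
      _ = X * (A * (N₁⁻¹ * Y)) := by simp only [Matrix.mul_assoc]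
  have hδh : δᴴ = δ := by
    rw [hδ]
    simp only [Matrix.conjTranspose_sub, Matrix.conjTranspose_add, Matrix.conjTranspose_mul,
      Matrix.conjTranspose_one, Matrix.conjTranspose_conjTranspose, hνh, hN₁h, hN₁ih,
      Matrix.mul_sub, Matrix.sub_mul, Matrix.mul_add, Matrix.add_mul, Matrix.mul_one,
      Matrix.one_mul, Matrix.mul_assoc, h1g]
    abel
  have hδih : δ⁻¹ᴴ = δ⁻¹ := by rw [Matrix.conjTranspose_nonsing_inv, hδh]
  -- `A * u = a` (this is where `c = 0` is used)
  have hAu : A * u = a := by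
    rw [hu, Matrix.mul_add, ← ha]
    simp only [Matrix.sub_mul, Matrix.mul_sub, Matrix.one_mul, Matrix.mul_assoc, gX1,
      sub_self, add_zero]
  -- the key product identity
  have key : Matrix.fromCols A a * X' = A * X := by
    rw [hX', Matrix.fromCols_mul_fromRows, Matrix.mul_sub, ← Matrix.mul_assoc A u b, hAu]
    abel
  have hAXa : A * X * a = a := by
    rw [ha, ← Matrix.mul_assoc, hX1]
  -- pieces for the second Penrose equation
  have hbAX : b * (A * X) = b := by
    rw [hb]; simp only [Matrix.mul_assoc, gX2b]
  have hTAX : (X - u * b) * (A * X) = X - u * b := by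
    rw [Matrix.sub_mul, Matrix.mul_assoc u b, hbAX, gX2b]
  -- simplified forms of the blocks of `X' * [A | a]`
  have hba : b * a = δ⁻¹ * (dᴴ * N₁ * d - lᴴ * d) := by
    rw [hb, Matrix.mul_assoc, Matrix.mul_assoc, ← hd, Matrix.sub_mul]
  have hbA : b * A = δ⁻¹ * (dᴴ * N₁ - lᴴ * (X * A)) := by
    rw [hb, Matrix.mul_assoc, Matrix.mul_assoc, Matrix.sub_mul, hdN]
  have hTA : (X - u * b) * A = X * A - u * (δ⁻¹ * (dᴴ * N₁ - lᴴ * (X * A))) := by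
    rw [Matrix.sub_mul, Matrix.mul_assoc, hbA]
  have hTa : (X - u * b) * a = d - u * (δ⁻¹ * (dᴴ * N₁ * d - lᴴ * d)) := by
    rw [Matrix.sub_mul, Matrix.mul_assoc, hba, ← hd]
  have hprod : X' * Matrix.fromCols A a =
      Matrix.fromBlocks
        (X * A - u * (δ⁻¹ * (dᴴ * N₁ - lᴴ * (X * A))))
        (d - u * (δ⁻¹ * (dᴴ * N₁ * d - lᴴ * d)))
        (δ⁻¹ * (dᴴ * N₁ - lᴴ * (X * A)))
        (δ⁻¹ * (dᴴ * N₁ * d - lᴴ * d)) := by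
    rw [hX', Matrix.fromRows_mul_fromCols, hTA, hTa, hbA, hba]
  -- coefficient identities
  have hQl : N₁ * ((1 - X * A) * N₁⁻¹ * l) = l - Aᴴ * (Xᴴ * l) := by
    simp only [Matrix.sub_mul, Matrix.mul_sub, Matrix.one_mul, Matrix.mul_one,
      Matrix.mul_assoc, gsym', gN1]
  have hNul : N₁ * u - l = N₁ * d - Aᴴ * (Xᴴ * l) := by
    rw [hu, Matrix.mul_add, hQl]; abel
  have hcoef : ν - lᴴ * u = δ - (dᴴ * N₁ * d - dᴴ * l) := by
    rw [hδ, hu]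
    simp only [Matrix.mul_add, Matrix.mul_assoc]
    abel
  -- the four blocks of `N * (X' * [A | a])`
  have hE11 : N₁ * (X * A - u * (δ⁻¹ * (dᴴ * N₁ - lᴴ * (X * A)))) +
        l * (δ⁻¹ * (dᴴ * N₁ - lᴴ * (X * A))) =
      N₁ * (X * A) - (N₁ * d - Aᴴ * (Xᴴ * l)) * (δ⁻¹ * (dᴴ * N₁ - lᴴ * (X * A))) := by
    rw [Matrix.mul_sub, ← Matrix.mul_assoc N₁ u, ← hNul, Matrix.sub_mul]; abel
  have hE12 : N₁ * (d - u * (δ⁻¹ * (dᴴ * N₁ * d - lᴴ * d))) +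
        l * (δ⁻¹ * (dᴴ * N₁ * d - lᴴ * d)) =
      N₁ * d - (N₁ * d - Aᴴ * (Xᴴ * l)) * (δ⁻¹ * (dᴴ * N₁ * d - lᴴ * d)) := by
    rw [Matrix.mul_sub, ← Matrix.mul_assoc N₁ u, ← hNul, Matrix.sub_mul]; abel
  have hE21 : lᴴ * (X * A - u * (δ⁻¹ * (dᴴ * N₁ - lᴴ * (X * A)))) +
        ν * (δ⁻¹ * (dᴴ * N₁ - lᴴ * (X * A))) =
      dᴴ * N₁ - (dᴴ * N₁ * d - dᴴ * l) * (δ⁻¹ * (dᴴ * N₁ - lᴴ * (X * A))) := by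
    calc lᴴ * (X * A - u * (δ⁻¹ * (dᴴ * N₁ - lᴴ * (X * A)))) +
          ν * (δ⁻¹ * (dᴴ * N₁ - lᴴ * (X * A)))
        = lᴴ * (X * A) + (ν - lᴴ * u) * (δ⁻¹ * (dᴴ * N₁ - lᴴ * (X * A))) := by
          rw [Matrix.mul_sub, Matrix.sub_mul, ← Matrix.mul_assoc lᴴ u]; abel
      _ = lᴴ * (X * A) +
            (δ - (dᴴ * N₁ * d - dᴴ * l)) * (δ⁻¹ * (dᴴ * N₁ - lᴴ * (X * A))) := by rw [hcoef]
      _ = dᴴ * N₁ - (dᴴ * N₁ * d - dᴴ * l) * (δ⁻¹ * (dᴴ * N₁ - lᴴ * (X * A))) := by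
          rw [Matrix.sub_mul, ← Matrix.mul_assoc δ δ⁻¹, hδi1, Matrix.one_mul]; abel
  have hE22 : lᴴ * (d - u * (δ⁻¹ * (dᴴ * N₁ * d - lᴴ * d))) +
        ν * (δ⁻¹ * (dᴴ * N₁ * d - lᴴ * d)) =
      dᴴ * N₁ * d - (dᴴ * N₁ * d - dᴴ * l) * (δ⁻¹ * (dᴴ * N₁ * d - lᴴ * d)) := by
    calc lᴴ * (d - u * (δ⁻¹ * (dᴴ * N₁ * d - lᴴ * d))) +
          ν * (δ⁻¹ * (dᴴ * N₁ * d - lᴴ * d))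
        = lᴴ * d + (ν - lᴴ * u) * (δ⁻¹ * (dᴴ * N₁ * d - lᴴ * d)) := by
          rw [Matrix.mul_sub, Matrix.sub_mul, ← Matrix.mul_assoc lᴴ u]; abel
      _ = lᴴ * d + (δ - (dᴴ * N₁ * d - dᴴ * l)) * (δ⁻¹ * (dᴴ * N₁ * d - lᴴ * d)) := by
          rw [hcoef]
      _ = dᴴ * N₁ * d - (dᴴ * N₁ * d - dᴴ * l) * (δ⁻¹ * (dᴴ * N₁ * d - lᴴ * d)) := by
          rw [Matrix.sub_mul, ← Matrix.mul_assoc δ δ⁻¹, hδi1, Matrix.one_mul]; abel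
  have key4 : Matrix.fromBlocks N₁ l lᴴ ν * (X' * Matrix.fromCols A a) =
      Matrix.fromBlocks
        (N₁ * (X * A) - (N₁ * d - Aᴴ * (Xᴴ * l)) * (δ⁻¹ * (dᴴ * N₁ - lᴴ * (X * A))))
        (N₁ * d - (N₁ * d - Aᴴ * (Xᴴ * l)) * (δ⁻¹ * (dᴴ * N₁ * d - lᴴ * d)))
        (dᴴ * N₁ - (dᴴ * N₁ * d - dᴴ * l) * (δ⁻¹ * (dᴴ * N₁ - lᴴ * (X * A))))
        (dᴴ * N₁ * d - (dᴴ * N₁ * d - dᴴ * l) * (δ⁻¹ * (dᴴ * N₁ * d - lᴴ * d))) := by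
    rw [hprod, Matrix.fromBlocks_multiply, hE11, hE12, hE21, hE22]
  -- Hermitian-ness of the four blocks
  have hCF11 : (N₁ * (X * A) - (N₁ * d - Aᴴ * (Xᴴ * l)) * (δ⁻¹ * (dᴴ * N₁ - lᴴ * (X * A))))ᴴ =
      N₁ * (X * A) - (N₁ * d - Aᴴ * (Xᴴ * l)) * (δ⁻¹ * (dᴴ * N₁ - lᴴ * (X * A))) := by
    simp only [Matrix.conjTranspose_sub, Matrix.conjTranspose_mul,
      Matrix.conjTranspose_conjTranspose, hN₁h, hδih, Matrix.sub_mul, Matrix.mul_sub,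
      Matrix.mul_assoc, hsym, hsymg]
    abel
  have hCF12 : (N₁ * d - (N₁ * d - Aᴴ * (Xᴴ * l)) * (δ⁻¹ * (dᴴ * N₁ * d - lᴴ * d)))ᴴ =
      dᴴ * N₁ - (dᴴ * N₁ * d - dᴴ * l) * (δ⁻¹ * (dᴴ * N₁ - lᴴ * (X * A))) := by
    simp only [Matrix.conjTranspose_sub, Matrix.conjTranspose_mul,
      Matrix.conjTranspose_conjTranspose, hN₁h, hδih, Matrix.sub_mul, Matrix.mul_sub,
      Matrix.mul_assoc, hsym, hsymg]
    abel
  have hCF21 : (dᴴ * N₁ - (dᴴ * N₁ * d - dᴴ * l) * (δ⁻¹ * (dᴴ * N₁ - lᴴ * (X * A))))ᴴ =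
      N₁ * d - (N₁ * d - Aᴴ * (Xᴴ * l)) * (δ⁻¹ * (dᴴ * N₁ * d - lᴴ * d)) := by
    rw [← hCF12, Matrix.conjTranspose_conjTranspose]
  have hCF22 : (dᴴ * N₁ * d - (dᴴ * N₁ * d - dᴴ * l) * (δ⁻¹ * (dᴴ * N₁ * d - lᴴ * d)))ᴴ =
      dᴴ * N₁ * d - (dᴴ * N₁ * d - dᴴ * l) * (δ⁻¹ * (dᴴ * N₁ * d - lᴴ * d)) := by
    simp only [Matrix.conjTranspose_sub, Matrix.conjTranspose_mul,
      Matrix.conjTranspose_conjTranspose, hN₁h, hδih, Matrix.sub_mul, Matrix.mul_sub,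
      Matrix.mul_assoc]
    abel
  refine ⟨?_, ?_, ?_, ?_⟩
  · rw [key, Matrix.mul_fromCols, hX1, hAXa]
  · rw [Matrix.mul_assoc, key, hX', Matrix.fromRows_mul, hTAX, hbAX]
  · rw [Matrix.mul_assoc, key, ← Matrix.mul_assoc]; exact hX3
  · rw [Matrix.mul_assoc, key4, Matrix.fromBlocks_conjTranspose, hCF11, hCF21, hCF12, hCF22]
end

section
/- Let m, k be positive natural numbers. Let A be an m×k complex matrix, a an m×1 complex matrix, M an m×m Hermitian positive definite complex matrix, and let N = fromBlocks N₁ l lᴴ ν be a (k+1)×(k+1) Hermitian positive definite complex matrix (with N₁ ∈ ℂ^{k×k}, l ∈ ℂ^{k×1}, ν ∈ ℂ^{1×1}). Let X ∈ ℂ^{k×m} be the weighted Moore-Penrose inverse of A with respect to (M, N₁). Set d = X*a and c = a − A*d, and assume c = 0. Then the sole entry of the 1×1 matrix δ = ν + dᴴ*N₁*d − (dᴴ*l + lᴴ*d) − lᴴ*(I_k − X*A)*N₁⁻¹*l is a real number and is strictly positive; in particular δ is invertible. -/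
open Matrix ComplexOrder

/-- In the `c = 0` case of Wang's partitioning method, the scalar
`δ = ν + dᴴ*N₁*d - (dᴴ*l + lᴴ*d) - lᴴ*(I - X*A)*N₁⁻¹*l` is a strictly positive real
number; in particular the 1×1 matrix `δ` is invertible. -/
theorem weighted_moore_penrose_delta_pos
    (m k : ℕ) (hm : 0 < m) (hk : 0 < k)
    (A : Matrix (Fin m) (Fin k) ℂ) (a : Matrix (Fin m) (Fin 1) ℂ)
    (M : Matrix (Fin m) (Fin m) ℂ) (hM : M.PosDef)
    (N₁ : Matrix (Fin k) (Fin k) ℂ) (l : Matrix (Fin k) (Fin 1) ℂ)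
    (ν : Matrix (Fin 1) (Fin 1) ℂ)
    (hN : (Matrix.fromBlocks N₁ l lᴴ ν).PosDef)
    (X : Matrix (Fin k) (Fin m) ℂ)
    (hX1 : A * X * A = A) (hX2 : X * A * X = X)
    (hX3 : (M * A * X)ᴴ = M * A * X) (hX4 : (N₁ * X * A)ᴴ = N₁ * X * A)
    (d : Matrix (Fin k) (Fin 1) ℂ) (hd : d = X * a)
    (c : Matrix (Fin m) (Fin 1) ℂ) (hc : c = a - A * d) (hc0 : c = 0)
    (δ : Matrix (Fin 1) (Fin 1) ℂ)
    (hδ : δ = ν + dᴴ * N₁ * d - (dᴴ * l + lᴴ * d) - lᴴ * (1 - X * A) * N₁⁻¹ * l) :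
    (δ 0 0).im = 0 ∧ 0 < (δ 0 0).re ∧ IsUnit δ := by
  -- basic facts
  have hAd : A * d = a := by
    have h := hc0
    rw [hc, sub_eq_zero] at h
    exact h.symm
  have hPd : X * A * d = d := by
    rw [Matrix.mul_assoc, hAd, ← hd]
  -- N₁ is positive definite
  have hblk := Matrix.isHermitian_fromBlocks_iff.mp hN.1
  have hN₁ : N₁.PosDef := by
    refine Matrix.PosDef.of_dotProduct_mulVec_pos hblk.1 (fun x hx => ?_)
    have hxy : (Sum.elim x (0 : Fin 1 → ℂ)) ≠ 0 := by
      intro h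
      exact hx (funext fun i => congrFun h (Sum.inl i))
    have := hN.dotProduct_mulVec_pos hxy
    simpa [Matrix.fromBlocks_mulVec, Function.star_sumElim, dotProduct] using this
  have hN₁H : N₁ᴴ = N₁ := hN₁.1
  haveI : Invertible N₁ := hN₁.isUnit.invertible
  have hNNinv : N₁ * N₁⁻¹ = 1 := Matrix.mul_inv_of_invertible N₁
  have hNinvN : N₁⁻¹ * N₁ = 1 := Matrix.inv_mul_of_invertible N₁
  have hNinvH : N₁⁻¹ᴴ = N₁⁻¹ := by
    rw [Matrix.conjTranspose_nonsing_inv, hN₁H]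
  -- commutation relation : N₁ * X * A = Aᴴ * Xᴴ * N₁
  have hcomm : N₁ * X * A = Aᴴ * Xᴴ * N₁ := by
    conv_lhs => rw [← hX4]
    simp [Matrix.conjTranspose_mul, hN₁H, Matrix.mul_assoc]
  -- the Schur complement is positive definite
  have hS : (ν - lᴴ * N₁⁻¹ * l).PosDef := by
    refine Matrix.PosDef.of_dotProduct_mulVec_pos ((Matrix.IsHermitian.fromBlocks₁₁ l ν hN₁.1).mp hN.1) (fun y hy => ?_)
    have hxy : (Sum.elim (-((N₁⁻¹ * l) *ᵥ y)) y) ≠ 0 := by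
      intro h
      exact hy (funext fun i => congrFun h (Sum.inr i))
    have h0 := hN.dotProduct_mulVec_pos hxy
    rw [Matrix.dotProduct_mulVec,
      Matrix.schur_complement_eq₁₁ l ν _ _ hN₁.1, neg_add_cancel] at h0
    simpa [Matrix.dotProduct_mulVec] using h0
  -- key algebraic identity
  set w : Matrix (Fin k) (Fin 1) ℂ := X * A * (d - N₁⁻¹ * l) with hw
  have hwd : w = d - X * A * (N₁⁻¹ * l) := by
    rw [hw, Matrix.mul_sub, hPd]
  have f1 : dᴴ * N₁ * (X * A * (N₁⁻¹ * l)) = dᴴ * l := by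
    calc dᴴ * N₁ * (X * A * (N₁⁻¹ * l)) = dᴴ * (N₁ * X * A) * N₁⁻¹ * l := by
          simp only [Matrix.mul_assoc]
      _ = dᴴ * (Aᴴ * Xᴴ * N₁) * N₁⁻¹ * l := by rw [hcomm]
      _ = (X * A * d)ᴴ * (N₁ * N₁⁻¹) * l := by
          simp only [Matrix.conjTranspose_mul, Matrix.mul_assoc]
      _ = dᴴ * l := by rw [hPd, hNNinv, Matrix.mul_one]
  have f2 : (X * A * (N₁⁻¹ * l))ᴴ * N₁ * d = lᴴ * d := by
    calc (X * A * (N₁⁻¹ * l))ᴴ * N₁ * d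
        = lᴴ * N₁⁻¹ * (Aᴴ * Xᴴ * N₁) * d := by
          simp only [Matrix.conjTranspose_mul, hNinvH, Matrix.mul_assoc]
      _ = lᴴ * (N₁⁻¹ * N₁) * (X * A * d) := by
          rw [← hcomm]; simp only [Matrix.mul_assoc]
      _ = lᴴ * d := by rw [hNinvN, hPd, Matrix.mul_one]
  have f3 : (X * A * (N₁⁻¹ * l))ᴴ * N₁ * (X * A * (N₁⁻¹ * l))
      = lᴴ * (X * A) * N₁⁻¹ * l := by
    calc (X * A * (N₁⁻¹ * l))ᴴ * N₁ * (X * A * (N₁⁻¹ * l))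
        = lᴴ * N₁⁻¹ * (Aᴴ * Xᴴ * N₁) * (X * A * (N₁⁻¹ * l)) := by
          simp only [Matrix.conjTranspose_mul, hNinvH, Matrix.mul_assoc]
      _ = lᴴ * (N₁⁻¹ * N₁) * (X * A * X * A * (N₁⁻¹ * l)) := by
          rw [← hcomm]; simp only [Matrix.mul_assoc]
      _ = lᴴ * (X * A * (N₁⁻¹ * l)) := by
          rw [hNinvN, hX2, Matrix.mul_one]
      _ = lᴴ * (X * A) * N₁⁻¹ * l := by simp only [Matrix.mul_assoc]
  have expand : wᴴ * N₁ * w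
      = dᴴ * N₁ * d - (dᴴ * N₁ * (X * A * (N₁⁻¹ * l)))
        - ((X * A * (N₁⁻¹ * l))ᴴ * N₁ * d)
        + ((X * A * (N₁⁻¹ * l))ᴴ * N₁ * (X * A * (N₁⁻¹ * l))) := by
    rw [hwd, Matrix.conjTranspose_sub]
    simp only [Matrix.sub_mul, Matrix.mul_sub]
    abel
  have key : δ = (ν - lᴴ * N₁⁻¹ * l) + wᴴ * N₁ * w := by
    rw [hδ, expand, f1, f2, f3]
    simp only [Matrix.sub_mul, Matrix.mul_sub, Matrix.one_mul, Matrix.mul_one]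
    abel
  -- positivity of the two summands, evaluated at the single entry
  have hone : (fun _ => 1 : Fin 1 → ℂ) ≠ 0 := by
    intro h
    simpa using congrFun h 0
  have entry : ∀ Q : Matrix (Fin 1) (Fin 1) ℂ,
      dotProduct (star (fun _ => 1 : Fin 1 → ℂ)) (Q *ᵥ (fun _ => 1)) = Q 0 0 := by
    intro Q
    simp [dotProduct, Matrix.mulVec]
  have hSpos : 0 < (ν - lᴴ * N₁⁻¹ * l) 0 0 := by
    have := hS.dotProduct_mulVec_pos hone
    rwa [entry] at this
  have hQnn : 0 ≤ (wᴴ * N₁ * w) 0 0 := by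
    have := (hN₁.posSemidef.conjTranspose_mul_mul_same w).dotProduct_mulVec_nonneg (fun _ => 1)
    rwa [entry] at this
  have hδpos : 0 < δ 0 0 := by
    rw [key, Matrix.add_apply]
    calc (0 : ℂ) < (ν - lᴴ * N₁⁻¹ * l) 0 0 := hSpos
      _ ≤ (ν - lᴴ * N₁⁻¹ * l) 0 0 + (wᴴ * N₁ * w) 0 0 := le_add_of_nonneg_right hQnn
  obtain ⟨hre, him⟩ := Complex.lt_def.mp hδpos
  refine ⟨him.symm, by simpa using hre, ?_⟩
  rw [Matrix.isUnit_iff_isUnit_det, Matrix.det_fin_one]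
  have : δ 0 0 ≠ 0 := by
    intro h
    rw [h] at hδpos
    exact lt_irrefl _ hδpos
  exact this.isUnit
end
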